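/- For every choice of positive integers c, n, κ with m ≥ n + κ + 1 and d ≥ 4c, if Γ : ({0,1}^n)^c → ({0,1}^m)^d is chosen so that its restriction to every subset of size at most 2^κ is uniformly random on that subset (2^κ-independent), then with probability at least 1 − 2^{−dn/2}, Γ is 2^κ-unique: every nonempty subset S of size at most 2^κ contains x with at least one unique position-sensitive neighbor. -/

import Mathlib

open Finset
open scoped Classical


lemma aux_pow_le_descFactorial : ∀ (k n h : ℕ), h + k ≤ n + 1 → h ^ k ≤ n.descFactorial k
  | 0, _, _, _ => by simp
  | (k+1), n, h, hle => by
    rw [Nat.descFactorial_succ, pow_succ]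
    have h1 : h ≤ n - k := by omega
    have h2 : h ^ k ≤ n.descFactorial k := aux_pow_le_descFactorial k n h (by omega)
    calc h ^ k * h ≤ n.descFactorial k * h := Nat.mul_le_mul_right _ h2
    _ ≤ n.descFactorial k * (n - k) := Nat.mul_le_mul_left _ (by omega)
    _ = (n - k) * n.descFactorial k := Nat.mul_comm _ _

lemma aux_self_pow_le (h : ℕ) : h ^ h ≤ 4 ^ h * h.factorial := by
  have h1 : h ^ h ≤ (2 * h).descFactorial h :=
    aux_pow_le_descFactorial h (2 * h) h (by omega)
  have h2 : (2 * h).descFactorial h = h.factorial * (2 * h).choose h :=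
    Nat.descFactorial_eq_factorial_mul_choose _ _
  have h3 : (2 * h).choose h ≤ (2 * h + 1).choose h :=
    Nat.choose_le_choose h (by omega)
  have h4 : (2 * h + 1).choose h ≤ 4 ^ h := Nat.choose_middle_le_pow h
  calc h ^ h ≤ h.factorial * (2*h).choose h := h2 ▸ h1
  _ ≤ h.factorial * 4 ^ h := Nat.mul_le_mul_left _ (h3.trans h4)
  _ = 4 ^ h * h.factorial := Nat.mul_comm _ _

lemma aux_two_pow_le (s : ℕ) : 2 ^ s ≤ 2 * s.factorial := by
  induction s with
  | zero => simp
  | succ k ih =>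
    match k, ih with
    | 0, _ => norm_num
    | (j+1), ih =>
      rw [pow_succ, Nat.factorial_succ]
      calc 2 ^ (j+1) * 2 ≤ 2 * (j+1).factorial * 2 := Nat.mul_le_mul_right _ ih
      _ = 2 * (2 * (j+1).factorial) := by ring
      _ ≤ 2 * ((j+1+1) * (j+1).factorial) :=
        Nat.mul_le_mul_left _ (Nat.mul_le_mul_right _ (by omega))

lemma aux_key (N h n' e : ℕ) (hh : 1 ≤ h) (he : e ≤ 1) (hN : 4 * h * 2 ^ n' ≤ N) :
    (N.choose h * h ^ (2 * h + e)) ^ 2 * 2 ^ (n' * (2 * h + e)) ≤ N ^ (2 * (2 * h + e)) := by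
  set F := h.factorial with hF
  have hFpos : 0 < F ^ 2 := by positivity
  refine Nat.le_of_mul_le_mul_right ?_ hFpos
  have hCF : N.choose h * F ≤ N ^ h := by
    rw [hF, mul_comm, ← Nat.descFactorial_eq_factorial_mul_choose]
    exact Nat.descFactorial_le_pow _ _
  have hhh : h ^ h ≤ 4 ^ h * F := aux_self_pow_le h
  have hNsq : 16 * (h ^ 2 * (2 ^ n') ^ 2) ≤ N ^ 2 := by
    have := Nat.pow_le_pow_left hN 2
    calc 16 * (h ^ 2 * (2 ^ n') ^ 2) = (4 * h * 2 ^ n') ^ 2 := by ring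
    _ ≤ N ^ 2 := this
  have hNsq2 : h ^ 2 * 2 ^ n' ≤ N ^ 2 := by
    have h1 : (1:ℕ) ≤ 2 ^ n' := Nat.one_le_two_pow
    calc h ^ 2 * 2 ^ n' = h ^ 2 * 2 ^ n' * 1 := by ring
    _ ≤ h ^ 2 * 2 ^ n' * (16 * 2 ^ n') := Nat.mul_le_mul_left _ (by omega)
    _ = 16 * (h ^ 2 * (2 ^ n') ^ 2) := by ring
    _ ≤ N ^ 2 := hNsq
  have e1 : (h ^ (2*h+e))^2 = (h^h)^2 * ((h^2)^h * (h^2)^e) := by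
    rw [← pow_mul, ← pow_mul, ← pow_mul, ← pow_mul, ← pow_add, ← pow_add]
    congr 1; ring
  have e2 : (2:ℕ) ^ (n' * (2*h+e)) = ((2^n')^2)^h * (2^n')^e := by
    rw [← pow_mul, ← pow_mul, ← pow_mul, ← pow_add]
    congr 1; ring
  have e3 : ((4:ℕ)^h)^2 = 16 ^ h := by
    rw [← pow_mul, mul_comm, pow_mul]; norm_num
  calc (N.choose h * h ^ (2*h+e))^2 * 2^(n' * (2*h+e)) * F^2
      = (N.choose h * F)^2 * ((h ^ (2*h+e))^2 * 2^(n' * (2*h+e))) := by ring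
    _ ≤ (N^h)^2 * ((h ^ (2*h+e))^2 * 2^(n' * (2*h+e))) :=
        Nat.mul_le_mul_right _ (Nat.pow_le_pow_left hCF 2)
    _ = (N^h)^2 * (h^h)^2 * (h^2 * (2^n')^2)^h * (h^2 * 2^n')^e := by
        rw [e1, e2, mul_pow, mul_pow]; ring
    _ ≤ (N^h)^2 * (4^h * F)^2 * (h^2 * (2^n')^2)^h * (h^2 * 2^n')^e := by
        gcongr
    _ = (N^h)^2 * F^2 * (16 * (h^2 * (2^n')^2))^h * (h^2 * 2^n')^e := by
        rw [mul_pow (4^h) F, e3, mul_pow 16]; ring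
    _ ≤ (N^h)^2 * F^2 * (N^2)^h * (N^2)^e :=
        Nat.mul_le_mul (Nat.mul_le_mul_left _ (Nat.pow_le_pow_left hNsq h))
          (Nat.pow_le_pow_left hNsq2 e)
    _ = N ^ (2*(2*h+e)) * F^2 := by
        rw [← pow_mul, ← pow_mul, ← pow_mul,
          show 2*(2*h+e) = h*2 + (2*h + 2*e) from by ring, pow_add, pow_add]
        ring

open Finset in
lemma aux_slice {U V : Type*} [Fintype U] [Fintype V] [DecidableEq U] [DecidableEq V] {d : ℕ}
    (v0 : V) (S : Finset U) :
    (univ.filter (fun g : U → (Fin d → V) =>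
        (∀ x ∈ S, ∀ i, ∃ y ∈ S.erase x, g y i = g x i) ∧ ∀ x ∉ S, g x = fun _ => v0)).card
      ≤ (univ.filter (fun q : U → V =>
        (∀ x ∈ S, ∃ y ∈ S.erase x, q y = q x) ∧ ∀ x ∉ S, q x = v0)).card ^ d := by
  classical
  set Q := univ.filter (fun q : U → V =>
        (∀ x ∈ S, ∃ y ∈ S.erase x, q y = q x) ∧ ∀ x ∉ S, q x = v0) with hQ
  set P := univ.filter (fun g : U → (Fin d → V) =>
        (∀ x ∈ S, ∀ i, ∃ y ∈ S.erase x, g y i = g x i) ∧ ∀ x ∉ S, g x = fun _ => v0) with hP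
  have hmaps : ∀ g ∈ P, (fun (i : Fin d) (x : U) => g x i) ∈
      Fintype.piFinset (fun _ : Fin d => Q) := by
    intro g hg
    rw [hP] at hg
    simp only [mem_filter, mem_univ, true_and] at hg
    rw [Fintype.mem_piFinset]
    intro i
    rw [hQ, mem_filter]
    refine ⟨mem_univ _, fun x hx => ?_, fun x hx => ?_⟩
    · obtain ⟨y, hy, hxy⟩ := hg.1 x hx i
      exact ⟨y, hy, hxy⟩
    · show g x i = v0
      rw [hg.2 x hx]
  have hinj : Set.InjOn (fun (g : U → (Fin d → V)) (i : Fin d) (x : U) => g x i) P := by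
    intro g1 _ g2 _ hy
    funext x i
    exact congrFun (congrFun hy i) x
  have h := Finset.card_le_card_of_injOn _ hmaps hinj
  refine h.trans (le_of_eq ?_)
  rw [Fintype.card_piFinset]
  simp

open Finset in
lemma aux_Q_card {U V : Type*} [Fintype U] [Fintype V] [DecidableEq U] [DecidableEq V]
    (v0 : V) (S : Finset U) (h : ℕ) (hh : S.card ≤ 2 * h + 1) (hhV : h ≤ Fintype.card V) :
    (univ.filter (fun q : U → V =>
        (∀ x ∈ S, ∃ y ∈ S.erase x, q y = q x) ∧ ∀ x ∉ S, q x = v0)).card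
      ≤ (Fintype.card V).choose h * h ^ S.card := by
  classical
  have hsub : (univ.filter (fun q : U → V =>
        (∀ x ∈ S, ∃ y ∈ S.erase x, q y = q x) ∧ ∀ x ∉ S, q x = v0))
      ⊆ (powersetCard h (univ : Finset V)).biUnion (fun R =>
          univ.filter (fun q : U → V => (∀ x ∈ S, q x ∈ R) ∧ ∀ x ∉ S, q x = v0)) := by
    intro q hq
    simp only [mem_filter, mem_univ, true_and] at hq
    set T := S.image q with hT
    have hfib : ∀ v ∈ T, 2 ≤ (S.filter (fun x => q x = v)).card := by
      intro v hv
      rw [hT, mem_image] at hv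
      obtain ⟨x, hx, hqx⟩ := hv
      obtain ⟨y, hy, hxy⟩ := hq.1 x hx
      have hyS : y ∈ S := (mem_erase.1 hy).2
      have hyx : y ≠ x := (mem_erase.1 hy).1
      refine Finset.one_lt_card.2 ⟨x, ?_, y, ?_, fun hc => hyx hc.symm⟩
      · exact mem_filter.2 ⟨hx, hqx⟩
      · exact mem_filter.2 ⟨hyS, by rw [hxy, hqx]⟩
    have hcardsum : S.card = ∑ v ∈ T, (S.filter fun x => q x = v).card :=
      Finset.card_eq_sum_card_fiberwise (fun x hx => mem_image_of_mem q hx)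
    have h2T : 2 * T.card ≤ S.card := by
      rw [hcardsum]
      calc 2 * T.card = ∑ _v ∈ T, 2 := by rw [sum_const, smul_eq_mul, mul_comm]
      _ ≤ ∑ v ∈ T, (S.filter fun x => q x = v).card := Finset.sum_le_sum hfib
    have hTh : T.card ≤ h := by omega
    obtain ⟨R, hTR, hRuniv, hRcard⟩ :=
      Finset.exists_subsuperset_card_eq (Finset.subset_univ T) hTh (by simpa using hhV)
    refine mem_biUnion.2 ⟨R, ?_, ?_⟩
    · exact Finset.mem_powersetCard.2 ⟨hRuniv, hRcard⟩
    · refine mem_filter.2 ⟨mem_univ _, fun x hx => hTR (mem_image_of_mem q hx), hq.2⟩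
  refine (Finset.card_le_card hsub).trans ((Finset.card_biUnion_le).trans ?_)
  have hbound : ∀ R ∈ powersetCard h (univ : Finset V),
      (univ.filter (fun q : U → V => (∀ x ∈ S, q x ∈ R) ∧ ∀ x ∉ S, q x = v0)).card
        ≤ h ^ S.card := by
    intro R hR
    have hRcard : R.card = h := (Finset.mem_powersetCard.1 hR).2
    have hsub2 : (univ.filter (fun q : U → V => (∀ x ∈ S, q x ∈ R) ∧ ∀ x ∉ S, q x = v0))
        ⊆ Fintype.piFinset (fun x : U => if x ∈ S then R else {v0}) := by
      intro q hq
      simp only [mem_filter, mem_univ, true_and] at hq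
      rw [Fintype.mem_piFinset]
      intro x
      by_cases hx : x ∈ S
      · simp [hx, hq.1 x hx]
      · simp [hx, hq.2 x hx]
    refine (Finset.card_le_card hsub2).trans (le_of_eq ?_)
    rw [Fintype.card_piFinset]
    calc (∏ x : U, (if x ∈ S then R else {v0}).card)
        = ∏ x : U, (if x ∈ S then h else 1) := by
          refine Finset.prod_congr rfl (fun x _ => ?_)
          by_cases hx : x ∈ S <;> simp [hx, hRcard]
      _ = h ^ S.card := by
          rw [Finset.prod_ite_mem, Finset.univ_inter, Finset.prod_const]
  calc (∑ R ∈ powersetCard h (univ : Finset V),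
        (univ.filter (fun q : U → V => (∀ x ∈ S, q x ∈ R) ∧ ∀ x ∉ S, q x = v0)).card)
      ≤ ∑ _R ∈ powersetCard h (univ : Finset V), h ^ S.card := Finset.sum_le_sum hbound
    _ = (Fintype.card V).choose h * h ^ S.card := by
        rw [sum_const, smul_eq_mul, Finset.card_powersetCard, card_univ]

/-- Position-sensitive neighborhood: `nbr Γ S = {(i, Γ x i) : x ∈ S, i}`. -/
def nbr {U V ι : Type*} [DecidableEq V] [DecidableEq ι] [Fintype ι]
    (Γ : U → ι → V) (S : Finset U) : Finset (ι × V) :=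
  (S ×ˢ (Finset.univ : Finset ι)).image (fun p => (p.2, Γ p.1 p.2))

/-- Lemma 2, first part: a `2^κ`-independent random function
`({0,1}^n)^c → ({0,1}^m)^d` with `m ≥ n + κ + 1` and `d ≥ 4c` is `2^κ`-unique
with probability at least `1 − 2^{−dn/2}`. -/
theorem stmt9 (c n κ m d : ℕ) (hc : 0 < c) (hn : 0 < n) (hκ : 0 < κ)
    (hm : n + κ + 1 ≤ m) (hd : 4 * c ≤ d)
    {Ω : Type*} [Fintype Ω] [Nonempty Ω]
    (G : Ω → (Fin c → Fin (2 ^ n)) → (Fin d → Fin (2 ^ m)))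
    (hindep : ∀ T : Finset (Fin c → Fin (2 ^ n)), T.card ≤ 2 ^ κ →
      ∀ g : (Fin c → Fin (2 ^ n)) → (Fin d → Fin (2 ^ m)),
        ((Finset.univ.filter (fun ω : Ω => ∀ x ∈ T, G ω x = g x)).card
            * Fintype.card (Fin d → Fin (2 ^ m)) ^ T.card : ℕ)
          = Fintype.card Ω) :
    (1 - (2 : ℝ) ^ (-((d * n : ℝ) / 2))) * (Fintype.card Ω : ℝ)
      ≤ ((Finset.univ.filter (fun ω : Ω =>
          ∀ S : Finset (Fin c → Fin (2 ^ n)), S.Nonempty → S.card ≤ 2 ^ κ →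
            ∃ x ∈ S, 0 < ((nbr (G ω) {x}) \ (nbr (G ω) (S.erase x))).card)).card : ℝ) := by
  classical
  have hd4 : 4 ≤ d := le_trans (by omega) hd
  have hVpos : 0 < 2 ^ m := Nat.pow_pos (by omega)
  set v0 : Fin (2 ^ m) := ⟨0, hVpos⟩ with hv0
  set q : ℝ := (2 : ℝ) ^ (-((d * n : ℝ) / 2)) with hq
  have hqpos : 0 < q := Real.rpow_pos_of_pos (by norm_num) _
  set Fail : Finset (Fin c → Fin (2 ^ n)) → Finset Ω := fun S =>
    univ.filter (fun ω => ∀ x ∈ S, ∀ i : Fin d, ∃ y ∈ S.erase x, G ω y i = G ω x i)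
    with hFail
  -- Step 1: counting bound per S, in ℕ
  have stepS : ∀ S : Finset (Fin c → Fin (2 ^ n)), 2 ≤ S.card → S.card ≤ 2 ^ κ →
      (Fail S).card ^ 2 * 2 ^ (n * d * S.card) ≤ (Fintype.card Ω) ^ 2 := by
    intro S hS2 hSκ
    set Pat := univ.filter (fun g : (Fin c → Fin (2 ^ n)) → (Fin d → Fin (2 ^ m)) =>
        (∀ x ∈ S, ∀ i, ∃ y ∈ S.erase x, g y i = g x i) ∧ ∀ x ∉ S, g x = fun _ => v0) with hPat
    set Qf := univ.filter (fun q' : (Fin c → Fin (2 ^ n)) → Fin (2 ^ m) =>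
        (∀ x ∈ S, ∃ y ∈ S.erase x, q' y = q' x) ∧ ∀ x ∉ S, q' x = v0) with hQdef
    have hK : Fintype.card (Fin d → Fin (2 ^ m)) = (2 ^ m) ^ d := by simp
    have hA : (Fail S).card * ((2 ^ m) ^ d) ^ S.card ≤ Pat.card * Fintype.card Ω := by
      have hsub : Fail S ⊆ Pat.biUnion (fun g => univ.filter (fun ω => ∀ x ∈ S, G ω x = g x)) := by
        intro ω hω
        rw [hFail] at hω
        simp only [mem_filter, mem_univ, true_and] at hω
        refine mem_biUnion.2 ⟨fun x => if x ∈ S then G ω x else (fun _ => v0), ?_, ?_⟩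
        · rw [hPat, mem_filter]
          refine ⟨mem_univ _, fun x hx i => ?_, fun x hx => if_neg hx⟩
          obtain ⟨y, hy, hxy⟩ := hω x hx i
          have hyS : y ∈ S := (mem_erase.1 hy).2
          exact ⟨y, hy, by simp [hx, hyS, hxy]⟩
        · exact mem_filter.2 ⟨mem_univ _, fun x hx => by simp [hx]⟩
      calc (Fail S).card * ((2 ^ m) ^ d) ^ S.card
          ≤ (Pat.biUnion (fun g => univ.filter (fun ω => ∀ x ∈ S, G ω x = g x))).card
              * ((2 ^ m) ^ d) ^ S.card := Nat.mul_le_mul_right _ (card_le_card hsub)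
        _ ≤ (∑ g ∈ Pat, (univ.filter (fun ω => ∀ x ∈ S, G ω x = g x)).card)
              * ((2 ^ m) ^ d) ^ S.card := Nat.mul_le_mul_right _ card_biUnion_le
        _ = ∑ g ∈ Pat,
              (univ.filter (fun ω => ∀ x ∈ S, G ω x = g x)).card * ((2 ^ m) ^ d) ^ S.card := by
            rw [Finset.sum_mul]
        _ = ∑ _g ∈ Pat, Fintype.card Ω := by
            refine Finset.sum_congr rfl (fun g _ => ?_)
            have hi := hindep S hSκ g
            rwa [hK] at hi
        _ = Pat.card * Fintype.card Ω := by rw [Finset.sum_const, smul_eq_mul]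
    have hB : Pat.card ≤ Qf.card ^ d := by
      rw [hPat, hQdef]; exact aux_slice v0 S
    set h := S.card / 2 with hhdef
    have hC : Qf.card ≤ (2 ^ m).choose h * h ^ S.card := by
      rw [hQdef]
      have h1 : S.card ≤ 2 * h + 1 := by omega
      have h2 : h ≤ Fintype.card (Fin (2 ^ m)) := by
        rw [Fintype.card_fin]
        have : S.card ≤ 2 ^ m :=
          le_trans hSκ (Nat.pow_le_pow_right (by norm_num) (by omega))
        omega
      have h3 := aux_Q_card v0 S h h1 h2
      rwa [Fintype.card_fin] at h3
    have hD : ((2 ^ m).choose h * h ^ S.card) ^ 2 * 2 ^ (n * S.card) ≤ (2 ^ m) ^ (2 * S.card) := by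
      have hsplit : S.card = 2 * h + S.card % 2 := by omega
      have he : S.card % 2 ≤ 1 := by omega
      have hh1 : 1 ≤ h := by omega
      have hN : 4 * h * 2 ^ n ≤ 2 ^ m := by
        calc 4 * h * 2 ^ n ≤ (2 * 2 ^ κ) * 2 ^ n := by
              have h4 : 4 * h ≤ 2 * 2 ^ κ := by omega
              exact Nat.mul_le_mul_right _ h4
          _ = 2 ^ (κ + n + 1) := by rw [pow_add, pow_add, pow_one]; ring
          _ ≤ 2 ^ m := Nat.pow_le_pow_right (by norm_num) (by omega)
      have hk := aux_key (2 ^ m) h n (S.card % 2) hh1 he hN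
      rwa [← hsplit] at hk
    have hE : Qf.card ^ 2 * 2 ^ (n * S.card) ≤ (2 ^ m) ^ (2 * S.card) :=
      le_trans (Nat.mul_le_mul_right _ (Nat.pow_le_pow_left hC 2)) hD
    have hF2 : Pat.card ^ 2 * 2 ^ (n * d * S.card) ≤ ((2 ^ m) ^ (2 * S.card)) ^ d := by
      have a1 : (Qf.card ^ d) ^ 2 = (Qf.card ^ 2) ^ d := by
        rw [← pow_mul, ← pow_mul, mul_comm]
      have a2 : (2:ℕ) ^ (n * d * S.card) = ((2:ℕ) ^ (n * S.card)) ^ d := by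
        rw [← pow_mul]; congr 1; ring
      calc Pat.card ^ 2 * 2 ^ (n * d * S.card)
          ≤ (Qf.card ^ d) ^ 2 * 2 ^ (n * d * S.card) :=
            Nat.mul_le_mul_right _ (Nat.pow_le_pow_left hB 2)
        _ = (Qf.card ^ 2 * 2 ^ (n * S.card)) ^ d := by rw [a1, a2, ← mul_pow]
        _ ≤ ((2 ^ m) ^ (2 * S.card)) ^ d := Nat.pow_le_pow_left hE d
    have hKpos : 0 < (((2 ^ m) ^ d) ^ S.card) ^ 2 := by positivity
    refine Nat.le_of_mul_le_mul_right ?_ hKpos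
    have eqK' : ∀ (a b e : ℕ), (a ^ (2 * b)) ^ e = ((a ^ e) ^ b) ^ 2 := fun a b e => by
      rw [← pow_mul, ← pow_mul, ← pow_mul]; congr 1; ring
    have eqK : ((2 ^ m) ^ (2 * S.card)) ^ d = (((2 ^ m) ^ d) ^ S.card) ^ 2 :=
      eqK' (2 ^ m) S.card d
    calc (Fail S).card ^ 2 * 2 ^ (n * d * S.card) * (((2 ^ m) ^ d) ^ S.card) ^ 2
        = ((Fail S).card * ((2 ^ m) ^ d) ^ S.card) ^ 2 * 2 ^ (n * d * S.card) := by ring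
      _ ≤ (Pat.card * Fintype.card Ω) ^ 2 * 2 ^ (n * d * S.card) :=
          Nat.mul_le_mul_right _ (Nat.pow_le_pow_left hA 2)
      _ = (Pat.card ^ 2 * 2 ^ (n * d * S.card)) * (Fintype.card Ω) ^ 2 := by ring
      _ ≤ ((2 ^ m) ^ (2 * S.card)) ^ d * (Fintype.card Ω) ^ 2 :=
          Nat.mul_le_mul_right _ hF2
      _ = (Fintype.card Ω) ^ 2 * (((2 ^ m) ^ d) ^ S.card) ^ 2 := by rw [eqK]; ring

  -- Step 2: real version per S
  have stepSR : ∀ S : Finset (Fin c → Fin (2 ^ n)), 2 ≤ S.card → S.card ≤ 2 ^ κ →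
      ((Fail S).card : ℝ) ≤ (Fintype.card Ω : ℝ) * q ^ S.card := by
    intro S h2 hκ'
    have h1 := stepS S h2 hκ'
    have h1R : ((Fail S).card : ℝ) ^ 2 * (2 : ℝ) ^ (n * d * S.card) ≤ (Fintype.card Ω : ℝ) ^ 2 := by
      exact_mod_cast h1
    have hiden : (q ^ S.card) ^ 2 * (2 : ℝ) ^ (n * d * S.card) = 1 := by
      have e1 : (q ^ S.card) ^ 2 = (2:ℝ) ^ (-((d * n : ℝ) / 2) * (S.card:ℝ) * ((2:ℕ):ℝ)) := by
        rw [hq, ← Real.rpow_natCast ((2:ℝ) ^ (-((d * n : ℝ) / 2))) S.card,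
          ← Real.rpow_mul (by norm_num),
          ← Real.rpow_natCast ((2:ℝ) ^ (-((d * n : ℝ) / 2) * (S.card:ℝ))) 2,
          ← Real.rpow_mul (by norm_num)]
      have e2 : (2 : ℝ) ^ (n * d * S.card) = (2:ℝ) ^ ((n * d * S.card : ℕ) : ℝ) :=
        (Real.rpow_natCast _ _).symm
      rw [e1, e2, ← Real.rpow_add (by norm_num)]
      rw [show -((d * n : ℝ) / 2) * (S.card:ℝ) * ((2:ℕ):ℝ) + ((n * d * S.card : ℕ) : ℝ) = 0 by
        push_cast; ring]
      exact Real.rpow_zero 2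
    have hqs : 0 < q ^ S.card := pow_pos hqpos _
    have h2R : ((Fail S).card : ℝ) ^ 2 ≤ ((Fintype.card Ω : ℝ) * q ^ S.card) ^ 2 := by
      rw [mul_pow]
      calc ((Fail S).card : ℝ) ^ 2
          = ((Fail S).card : ℝ) ^ 2 * ((2 : ℝ) ^ (n * d * S.card) * ((q ^ S.card) ^ 2)) := by
            rw [mul_comm ((2:ℝ) ^ (n * d * S.card)), hiden, mul_one]
        _ = (((Fail S).card : ℝ) ^ 2 * (2 : ℝ) ^ (n * d * S.card)) * (q ^ S.card) ^ 2 := by ring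
        _ ≤ (Fintype.card Ω : ℝ) ^ 2 * (q ^ S.card) ^ 2 :=
            mul_le_mul_of_nonneg_right h1R (by positivity)
    exact le_of_pow_le_pow_left₀ (by norm_num) (by positivity) h2R
  -- Step 3: split into good and bad
  have hsplit := Finset.card_filter_add_card_filter_not
      (s := (univ : Finset Ω)) (p := fun ω : Ω =>
        ∀ S : Finset (Fin c → Fin (2 ^ n)), S.Nonempty → S.card ≤ 2 ^ κ →
          ∃ x ∈ S, 0 < ((nbr (G ω) {x}) \ (nbr (G ω) (S.erase x))).card)
  rw [Finset.card_univ] at hsplit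
  set bad := univ.filter (fun ω : Ω => ¬ (∀ S : Finset (Fin c → Fin (2 ^ n)),
      S.Nonempty → S.card ≤ 2 ^ κ →
        ∃ x ∈ S, 0 < ((nbr (G ω) {x}) \ (nbr (G ω) (S.erase x))).card)) with hbad
  suffices hb : (bad.card : ℝ) ≤ q * (Fintype.card Ω : ℝ) by
    have h1 : ((univ.filter (fun ω : Ω =>
        ∀ S : Finset (Fin c → Fin (2 ^ n)), S.Nonempty → S.card ≤ 2 ^ κ →
          ∃ x ∈ S, 0 < ((nbr (G ω) {x}) \ (nbr (G ω) (S.erase x))).card)).card : ℝ)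
        + (bad.card : ℝ) = (Fintype.card Ω : ℝ) := by exact_mod_cast hsplit
    nlinarith [Nat.cast_nonneg (α := ℝ) (Fintype.card Ω)]
  set SS : Finset (Finset (Fin c → Fin (2 ^ n))) :=
    univ.filter (fun S => 2 ≤ S.card ∧ S.card ≤ 2 ^ κ) with hSS
  have hmemnbr : ∀ (ω : Ω) (x) (i : Fin d), (i, G ω x i) ∈ nbr (G ω) ({x} : Finset _) := by
    intro ω x i
    refine Finset.mem_image.2 ⟨(x, i), ?_, rfl⟩
    rw [Finset.mem_product]; exact ⟨mem_singleton_self x, mem_univ i⟩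
  have hbadsub : bad ⊆ SS.biUnion Fail := by
    intro ω hω
    rw [hbad] at hω
    simp only [mem_filter, mem_univ, true_and] at hω
    push_neg at hω
    obtain ⟨S, hne, hcard, hfail⟩ := hω
    have hfail' : ∀ x ∈ S, nbr (G ω) {x} ⊆ nbr (G ω) (S.erase x) := by
      intro x hx
      have h0 : ((nbr (G ω) {x}) \ (nbr (G ω) (S.erase x))).card = 0 := by
        have := hfail x hx; omega
      exact Finset.sdiff_eq_empty_iff_subset.1 (Finset.card_eq_zero.1 h0)
    have hcond : ∀ x ∈ S, ∀ i : Fin d, ∃ y ∈ S.erase x, G ω y i = G ω x i := by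
      intro x hx i
      have hmem := hfail' x hx (hmemnbr ω x i)
      obtain ⟨p, hp, heq⟩ := Finset.mem_image.1 hmem
      rw [Finset.mem_product] at hp
      simp only [Prod.mk.injEq] at heq
      obtain ⟨he1, he2⟩ := heq
      rw [he1] at he2
      exact ⟨p.1, hp.1, he2⟩
    have hS2 : 2 ≤ S.card := by
      by_contra hlt
      have hpos : 0 < S.card := Finset.card_pos.2 hne
      have h1 : S.card = 1 := by omega
      obtain ⟨x, hxS⟩ := Finset.card_eq_one.1 h1
      have hmain := hfail x (by rw [hxS]; exact mem_singleton_self x)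
      rw [hxS, Finset.erase_singleton] at hmain
      have hnbr_empty : nbr (G ω) (∅ : Finset (Fin c → Fin (2 ^ n))) = ∅ := by
        simp [nbr]
      rw [hnbr_empty, Finset.sdiff_empty] at hmain
      have hd0 : 0 < d := by omega
      have hx0 : ((⟨0, hd0⟩ : Fin d), G ω x ⟨0, hd0⟩) ∈ nbr (G ω) ({x} : Finset _) :=
        hmemnbr ω x ⟨0, hd0⟩
      have := Finset.card_pos.2 ⟨_, hx0⟩
      omega
    refine mem_biUnion.2 ⟨S, ?_, ?_⟩
    · rw [hSS]; exact mem_filter.2 ⟨mem_univ _, hS2, hcard⟩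
    · rw [hFail]; exact mem_filter.2 ⟨mem_univ _, hcond⟩
  have hbad1 : (bad.card : ℝ) ≤ ∑ S ∈ SS, ((Fail S).card : ℝ) := by
    have h1 : bad.card ≤ ∑ S ∈ SS, (Fail S).card :=
      le_trans (Finset.card_le_card hbadsub) Finset.card_biUnion_le
    exact_mod_cast h1
  have hbad2 : (bad.card : ℝ) ≤ (Fintype.card Ω : ℝ) * ∑ S ∈ SS, q ^ S.card := by
    rw [Finset.mul_sum]
    refine hbad1.trans (Finset.sum_le_sum ?_)
    intro S hS
    rw [hSS, mem_filter] at hS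
    exact stepSR S hS.2.1 hS.2.2
  -- Step 4: sum over sizes
  have hdisj : (↑(Finset.Icc 2 (2 ^ κ)) : Set ℕ).PairwiseDisjoint
      (fun s => powersetCard s (univ : Finset (Fin c → Fin (2 ^ n)))) := by
    intro a _ b _ hab
    refine Finset.disjoint_left.2 (fun S hSa hSb => hab ?_)
    rw [← (Finset.mem_powersetCard.1 hSa).2, ← (Finset.mem_powersetCard.1 hSb).2]
  have hsub2 : SS ⊆ (Finset.Icc 2 (2 ^ κ)).biUnion
      (fun s => powersetCard s (univ : Finset (Fin c → Fin (2 ^ n)))) := by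
    intro S hS
    rw [hSS, mem_filter] at hS
    refine mem_biUnion.2 ⟨S.card, ?_, ?_⟩
    · rw [Finset.mem_Icc]; exact ⟨hS.2.1, hS.2.2⟩
    · exact Finset.mem_powersetCard.2 ⟨Finset.subset_univ S, rfl⟩
  have hsum1 : ∑ S ∈ SS, q ^ S.card ≤ ∑ s ∈ Finset.Icc 2 (2 ^ κ),
      ∑ S ∈ powersetCard s (univ : Finset (Fin c → Fin (2 ^ n))), q ^ S.card := by
    rw [← Finset.sum_biUnion hdisj]
    exact Finset.sum_le_sum_of_subset_of_nonneg hsub2 (fun _ _ _ => by positivity)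
  set Mu := Fintype.card (Fin c → Fin (2 ^ n)) with hMu
  have hsum2 : ∀ s ∈ Finset.Icc 2 (2 ^ κ),
      (∑ S ∈ powersetCard s (univ : Finset (Fin c → Fin (2 ^ n))), q ^ S.card)
        = (Mu.choose s : ℝ) * q ^ s := by
    intro s _
    rw [Finset.sum_congr rfl (fun S hS => by rw [(Finset.mem_powersetCard.1 hS).2]),
      Finset.sum_const, Finset.card_powersetCard, card_univ, nsmul_eq_mul, hMu]
  have hMueq : (Mu : ℝ) = (2 : ℝ) ^ (n * c) := by
    have h1 : Mu = (2 ^ n) ^ c := by rw [hMu]; simp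
    rw [h1]; push_cast; rw [← pow_mul]
  set r : ℝ := (2 : ℝ) ^ (n * c) * q / 2 with hr
  have hrq : ∀ s : ℕ, (Mu.choose s : ℝ) * q ^ s ≤ 2 * r ^ s := by
    intro s
    have hnat : Mu.choose s * 2 ^ s ≤ 2 * Mu ^ s := by
      calc Mu.choose s * 2 ^ s ≤ Mu.choose s * (2 * s.factorial) :=
            Nat.mul_le_mul_left _ (aux_two_pow_le s)
        _ = 2 * (s.factorial * Mu.choose s) := by ring
        _ = 2 * Mu.descFactorial s := by rw [Nat.descFactorial_eq_factorial_mul_choose]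
        _ ≤ 2 * Mu ^ s := Nat.mul_le_mul_left _ (Nat.descFactorial_le_pow _ _)
    have hR : (Mu.choose s : ℝ) * 2 ^ s ≤ 2 * (Mu : ℝ) ^ s := by exact_mod_cast hnat
    have h2s : (0 : ℝ) < 2 ^ s := by positivity
    have hgoal : (Mu.choose s : ℝ) ≤ 2 * (Mu : ℝ) ^ s / 2 ^ s := by
      rw [le_div_iff₀ h2s]; exact hR
    have hrMu : r = (Mu : ℝ) * q / 2 := by rw [hr, hMueq]
    calc (Mu.choose s : ℝ) * q ^ s ≤ (2 * (Mu : ℝ) ^ s / 2 ^ s) * q ^ s :=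
          mul_le_mul_of_nonneg_right hgoal (by positivity)
      _ = 2 * ((Mu : ℝ) * q / 2) ^ s := by rw [div_pow, mul_pow]; ring
      _ = 2 * r ^ s := by rw [hrMu]
  have hr0 : 0 ≤ r := by
    rw [hr, hq]; positivity
  have hrhalf : r ≤ 1 / 2 := by
    have h1 : (2 : ℝ) ^ (n * c) * q ≤ 1 := by
      rw [hq, ← Real.rpow_natCast (2 : ℝ) (n * c), ← Real.rpow_add (by norm_num)]
      apply Real.rpow_le_one_of_one_le_of_nonpos (by norm_num)
      have hdr : (4 * c : ℝ) ≤ (d : ℝ) := by exact_mod_cast hd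
      have hnn : (0 : ℝ) ≤ (n : ℝ) := Nat.cast_nonneg n
      push_cast
      nlinarith
    rw [hr]; linarith
  have h4r2 : 4 * r ^ 2 ≤ q := by
    have h1 : ((2 : ℝ) ^ (n * c)) ^ 2 * q ≤ 1 := by
      rw [hq, ← Real.rpow_natCast (2 : ℝ) (n * c),
        ← Real.rpow_natCast ((2:ℝ) ^ ((n * c : ℕ) : ℝ)) 2,
        ← Real.rpow_mul (by norm_num), ← Real.rpow_add (by norm_num)]
      apply Real.rpow_le_one_of_one_le_of_nonpos (by norm_num)
      have hdr : (4 * c : ℝ) ≤ (d : ℝ) := by exact_mod_cast hd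
      have hnn : (0 : ℝ) ≤ (n : ℝ) := Nat.cast_nonneg n
      push_cast
      nlinarith
    have h2 : ((2 : ℝ) ^ (n * c) * q) ^ 2 ≤ q := by
      calc ((2 : ℝ) ^ (n * c) * q) ^ 2 = (((2 : ℝ) ^ (n * c)) ^ 2 * q) * q := by ring
        _ ≤ 1 * q := mul_le_mul_of_nonneg_right h1 (le_of_lt hqpos)
        _ = q := one_mul q
    calc 4 * r ^ 2 = ((2 : ℝ) ^ (n * c) * q) ^ 2 := by rw [hr]; ring
      _ ≤ q := h2
  have hgeom : ∑ s ∈ Finset.Icc 2 (2 ^ κ), r ^ s ≤ 2 * r ^ 2 := by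
    rw [show Finset.Icc 2 (2 ^ κ) = Finset.Ico 2 (2 ^ κ + 1) from by
      rw [Finset.Ico_add_one_right_eq_Icc], Finset.sum_Ico_eq_sum_range]
    calc ∑ j ∈ Finset.range (2 ^ κ + 1 - 2), r ^ (2 + j)
        = r ^ 2 * ∑ j ∈ Finset.range (2 ^ κ + 1 - 2), r ^ j := by
          rw [Finset.mul_sum]
          exact Finset.sum_congr rfl (fun j _ => by rw [pow_add])
      _ ≤ r ^ 2 * ∑ j ∈ Finset.range (2 ^ κ + 1 - 2), (1 / 2 : ℝ) ^ j := by
          apply mul_le_mul_of_nonneg_left _ (by positivity)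
          exact Finset.sum_le_sum (fun j _ => pow_le_pow_left₀ hr0 hrhalf j)
      _ ≤ r ^ 2 * 2 :=
          mul_le_mul_of_nonneg_left (sum_geometric_two_le _) (by positivity)
      _ = 2 * r ^ 2 := by ring
  -- Step 5: conclude
  have hchain : ∑ S ∈ SS, q ^ S.card ≤ q := by
    calc ∑ S ∈ SS, q ^ S.card
        ≤ ∑ s ∈ Finset.Icc 2 (2 ^ κ),
            ∑ S ∈ powersetCard s (univ : Finset (Fin c → Fin (2 ^ n))), q ^ S.card := hsum1
      _ = ∑ s ∈ Finset.Icc 2 (2 ^ κ), (Mu.choose s : ℝ) * q ^ s :=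
          Finset.sum_congr rfl hsum2
      _ ≤ ∑ s ∈ Finset.Icc 2 (2 ^ κ), 2 * r ^ s :=
          Finset.sum_le_sum (fun s _ => hrq s)
      _ = 2 * ∑ s ∈ Finset.Icc 2 (2 ^ κ), r ^ s := by rw [Finset.mul_sum]
      _ ≤ 2 * (2 * r ^ 2) := by linarith [hgeom]
      _ = 4 * r ^ 2 := by ring
      _ ≤ q := h4r2
  calc (bad.card : ℝ) ≤ (Fintype.card Ω : ℝ) * ∑ S ∈ SS, q ^ S.card := hbad2
    _ ≤ (Fintype.card Ω : ℝ) * q :=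
        mul_le_mul_of_nonneg_left hchain (Nat.cast_nonneg _)
    _ = q * (Fintype.card Ω : ℝ) := mul_comm _ _
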